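/- For every integer q ≥ 2, the quantity c_q = inf_{0<x<1} (1 − x^q)/(x^{(q−1)/3}(1 − x)) satisfies c_q ≥ 0.8414·q. -/

import Mathlib

lemma taylor11 (x : ℝ) (hx : 0 ≤ x) :
    1 + x + x^2/2 + x^3/6 + x^4/24 + x^5/120 + x^6/720 + x^7/5040 + x^8/40320
      + x^9/362880 + x^10/3628800 + x^11/39916800 ≤ Real.exp x := by
  have h := Real.sum_le_exp_of_nonneg hx 12
  simp [Finset.sum_range_succ, Nat.factorial] at h
  nlinarith [h]

lemma explow (x E : ℝ) (hx : 0 ≤ x)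
    (h : E ≤ 1 + x + x^2/2 + x^3/6 + x^4/24 + x^5/120 + x^6/720 + x^7/5040 + x^8/40320
      + x^9/362880 + x^10/3628800 + x^11/39916800) : E ≤ Real.exp x :=
  h.trans (taylor11 x hx)

lemma expupp (x U : ℝ) (hx : 0 ≤ x) (hU : 0 < U)
    (h : 1 ≤ U * (1 + x + x^2/2 + x^3/6 + x^4/24 + x^5/120 + x^6/720 + x^7/5040 + x^8/40320
      + x^9/362880 + x^10/3628800 + x^11/39916800)) : Real.exp (-x) ≤ U := by
  have h2 := taylor11 x hx
  have hp := Real.exp_pos x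
  rw [Real.exp_neg, inv_le_comm₀ hp hU]
  have hu : U⁻¹ * U = 1 := inv_mul_cancel₀ hU.ne'
  nlinarith [mul_le_mul_of_nonneg_left h (inv_pos.2 hU).le,
    mul_le_mul_of_nonneg_left h2 (inv_pos.2 hU).le]

lemma expupp' (a U : ℝ) (ha : 0 ≤ a) (hU : 0 < U)
    (h : 1 ≤ U * (1 + (2*a/3) + (2*a/3)^2/2 + (2*a/3)^3/6 + (2*a/3)^4/24 + (2*a/3)^5/120
      + (2*a/3)^6/720 + (2*a/3)^7/5040 + (2*a/3)^8/40320
      + (2*a/3)^9/362880 + (2*a/3)^10/3628800 + (2*a/3)^11/39916800)) :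
    Real.exp (-(2*a)/3) ≤ U := by
  have := expupp (2*a/3) U (by positivity) hU h
  rwa [show -(2*a/3) = -(2*a)/3 by ring] at this

lemma chord (a b t : ℝ) (hab : a < b) (hta : a ≤ t) (htb : t ≤ b) :
    (b - a) * Real.exp (-(2*t)/3) ≤ (b-t) * Real.exp (-(2*a)/3) + (t-a) * Real.exp (-(2*b)/3) := by
  have hba : (0:ℝ) < b - a := by linarith
  have hl : 0 ≤ (b-t)/(b-a) := div_nonneg (by linarith) hba.le
  have hm : 0 ≤ (t-a)/(b-a) := div_nonneg (by linarith) hba.le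
  have hsum : (b-t)/(b-a) + (t-a)/(b-a) = 1 := by field_simp; ring
  have hcx := convexOn_exp.2 (Set.mem_univ (-(2*a)/3)) (Set.mem_univ (-(2*b)/3)) hl hm hsum
  simp only [smul_eq_mul] at hcx
  have heq : (b-t)/(b-a) * (-(2*a)/3) + (t-a)/(b-a) * (-(2*b)/3) = -(2*t)/3 := by
    field_simp
    ring
  rw [heq] at hcx
  have := mul_le_mul_of_nonneg_left hcx hba.le
  calc (b - a) * Real.exp (-(2*t)/3)
      ≤ (b-a) * ((b-t)/(b-a) * Real.exp (-(2*a)/3) + (t-a)/(b-a) * Real.exp (-(2*b)/3)) := this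
    _ = (b-t) * Real.exp (-(2*a)/3) + (t-a) * Real.exp (-(2*b)/3) := by
        field_simp

lemma interval_step (a b t0 E0 Ua Ub : ℝ) (hab : a < b) (hE0 : 0 ≤ E0)
    (hE : E0 ≤ Real.exp (t0/3))
    (hUa : Real.exp (-(2*a)/3) ≤ Ua) (hUb : Real.exp (-(2*b)/3) ≤ Ub)
    (htan : 0 ≤ 1 + (a - t0)/3)
    (hA : 0.8414 * a + Ua ≤ E0 * (1 + (a - t0)/3))
    (hB : 0.8414 * b + Ub ≤ E0 * (1 + (b - t0)/3))
    {t : ℝ} (hta : a ≤ t) (htb : t ≤ b) :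
    0.8414 * t ≤ Real.exp (t/3) - Real.exp (-(2*t)/3) := by
  have hba : (0:ℝ) < b - a := by linarith
  have h1 : E0 * (1 + (t - t0)/3) ≤ Real.exp (t/3) := by
    have hx := Real.add_one_le_exp ((t - t0)/3)
    have hsp : Real.exp (t/3) = Real.exp (t0/3) * Real.exp ((t-t0)/3) := by
      rw [← Real.exp_add]; ring_nf
    rw [hsp]
    have htp : 0 ≤ 1 + (t - t0)/3 := by linarith
    calc E0 * (1 + (t - t0)/3) ≤ Real.exp (t0/3) * (1 + (t-t0)/3) :=
          mul_le_mul_of_nonneg_right hE htp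
      _ ≤ Real.exp (t0/3) * Real.exp ((t-t0)/3) := by
          have := (Real.exp_pos (t0/3)).le
          nlinarith
  have h2 : (b - a) * Real.exp (-(2*t)/3) ≤ (b-t) * Ua + (t-a) * Ub := by
    refine (chord a b t hab hta htb).trans ?_
    nlinarith [Real.exp_pos (-(2*a)/3), Real.exp_pos (-(2*b)/3)]
  have p3 : 0 ≤ (b - t) * (E0 * (1 + (a - t0)/3) - 0.8414 * a - Ua) :=
    mul_nonneg (by linarith) (by linarith)
  have p4 : 0 ≤ (t - a) * (E0 * (1 + (b - t0)/3) - 0.8414 * b - Ub) :=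
    mul_nonneg (by linarith) (by linarith)
  have h1' := mul_le_mul_of_nonneg_left h1 hba.le
  nlinarith [h1', h2, p3, p4, hba]

lemma core {t : ℝ} (ht : 0 ≤ t) : 0.8414 * t ≤ Real.exp (t/3) - Real.exp (-(2*t)/3) := by
  rcases le_or_gt t (19/20) with h0 | ha
  · -- small t : via sinh
    have hid : Real.exp (t/3) - Real.exp (-(2*t)/3)
        = Real.exp (-(t/6)) * (Real.exp (t/2) - Real.exp (-(t/2))) := by
      rw [mul_sub, ← Real.exp_add, ← Real.exp_add]
      ring_nf
    have hsinh : t/2 ≤ Real.sinh (t/2) := Real.self_le_sinh_iff.mpr (by linarith)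
    have h2s : Real.exp (t/2) - Real.exp (-(t/2)) = 2 * Real.sinh (t/2) := by
      rw [Real.sinh_eq]; ring
    have he : 1 - t/6 ≤ Real.exp (-(t/6)) := by
      have := Real.add_one_le_exp (-(t/6)); linarith
    rw [hid, h2s]
    have hc : (0.8414:ℝ) ≤ Real.exp (-(t/6)) := by nlinarith
    have hc2 : t ≤ 2 * Real.sinh (t/2) := by linarith
    nlinarith [mul_le_mul hc hc2 ht (Real.exp_pos (-(t/6))).le]
  have ha : (19/20:ℝ) < t := ha
  rcases le_or_gt t (83/50) with hb | hb
  · exact interval_step (19/20) (83/50) (261/200) (1544963/1000000) (1061639/2000000) (1653297/5000000)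
      (by norm_num) (by norm_num)
      (explow ((261/200)/3) (1544963/1000000) (by norm_num) (by norm_num))
      (expupp' (19/20) (1061639/2000000) (by norm_num) (by norm_num) (by norm_num))
      (expupp' (83/50) (1653297/5000000) (by norm_num) (by norm_num) (by norm_num))
      (by norm_num) (by norm_num) (by norm_num) ha.le hb
  have ha : ((83/50):ℝ) < t := hb
  clear hb
  rcases le_or_gt t (39/20) with hb | hb
  · exact interval_step (83/50) (39/20) (361/200) (18251581/10000000) (1653297/5000000) (1362659/5000000)
      (by norm_num) (by norm_num)
      (explow ((361/200)/3) (18251581/10000000) (by norm_num) (by norm_num))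
      (expupp' (83/50) (1653297/5000000) (by norm_num) (by norm_num) (by norm_num))
      (expupp' (39/20) (1362659/5000000) (by norm_num) (by norm_num) (by norm_num))
      (by norm_num) (by norm_num) (by norm_num) ha.le hb
  have ha : ((39/20):ℝ) < t := hb
  clear hb
  rcases le_or_gt t (207/100) with hb | hb
  · exact interval_step (39/20) (207/100) (201/100) (19542373/10000000) (1362659/5000000) (1257893/5000000)
      (by norm_num) (by norm_num)
      (explow ((201/100)/3) (19542373/10000000) (by norm_num) (by norm_num))
      (expupp' (39/20) (1362659/5000000) (by norm_num) (by norm_num) (by norm_num))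
      (expupp' (207/100) (1257893/5000000) (by norm_num) (by norm_num) (by norm_num))
      (by norm_num) (by norm_num) (by norm_num) ha.le hb
  have ha : ((207/100):ℝ) < t := hb
  clear hb
  rcases le_or_gt t (53/25) with hb | hb
  · exact interval_step (207/100) (53/25) (419/200) (2512999/1250000) (1257893/5000000) (2433309/10000000)
      (by norm_num) (by norm_num)
      (explow ((419/200)/3) (2512999/1250000) (by norm_num) (by norm_num))
      (expupp' (207/100) (1257893/5000000) (by norm_num) (by norm_num) (by norm_num))
      (expupp' (53/25) (2433309/10000000) (by norm_num) (by norm_num) (by norm_num))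
      (by norm_num) (by norm_num) (by norm_num) ha.le hb
  have ha : ((53/25):ℝ) < t := hb
  clear hb
  rcases le_or_gt t (109/50) with hb | hb
  · exact interval_step (53/25) (109/50) (43/20) (4095193/2000000) (2433309/10000000) (1168949/5000000)
      (by norm_num) (by norm_num)
      (explow ((43/20)/3) (4095193/2000000) (by norm_num) (by norm_num))
      (expupp' (53/25) (2433309/10000000) (by norm_num) (by norm_num) (by norm_num))
      (expupp' (109/50) (1168949/5000000) (by norm_num) (by norm_num) (by norm_num))
      (by norm_num) (by norm_num) (by norm_num) ha.le hb
  have ha : ((109/50):ℝ) < t := hb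
  clear hb
  rcases le_or_gt t (56/25) with hb | hb
  · exact interval_step (109/50) (56/25) (221/100) (10444803/5000000) (1168949/5000000) (2246227/10000000)
      (by norm_num) (by norm_num)
      (explow ((221/100)/3) (10444803/5000000) (by norm_num) (by norm_num))
      (expupp' (109/50) (1168949/5000000) (by norm_num) (by norm_num) (by norm_num))
      (expupp' (56/25) (2246227/10000000) (by norm_num) (by norm_num) (by norm_num))
      (by norm_num) (by norm_num) (by norm_num) ha.le hb
  have ha : ((56/25):ℝ) < t := hb
  clear hb
  rcases le_or_gt t (119/50) with hb | hb
  · exact interval_step (56/25) (119/50) (231/100) (10798831/5000000) (2246227/10000000) (1023033/5000000)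
      (by norm_num) (by norm_num)
      (explow ((231/100)/3) (10798831/5000000) (by norm_num) (by norm_num))
      (expupp' (56/25) (2246227/10000000) (by norm_num) (by norm_num) (by norm_num))
      (expupp' (119/50) (1023033/5000000) (by norm_num) (by norm_num) (by norm_num))
      (by norm_num) (by norm_num) (by norm_num) ha.le hb
  have ha : ((119/50):ℝ) < t := hb
  clear hb
  rcases le_or_gt t (271/100) with hb | hb
  · exact interval_step (119/50) (271/100) (509/200) (11678753/5000000) (1023033/5000000) (1642007/10000000)
      (by norm_num) (by norm_num)
      (explow ((509/200)/3) (11678753/5000000) (by norm_num) (by norm_num))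
      (expupp' (119/50) (1023033/5000000) (by norm_num) (by norm_num) (by norm_num))
      (expupp' (271/100) (1642007/10000000) (by norm_num) (by norm_num) (by norm_num))
      (by norm_num) (by norm_num) (by norm_num) ha.le hb
  have ha : ((271/100):ℝ) < t := hb
  clear hb
  rcases le_or_gt t (31/10) with hb | hb
  · exact interval_step (271/100) (31/10) (581/200) (5267103/2000000) (1642007/10000000) (633037/5000000)
      (by norm_num) (by norm_num)
      (explow ((581/200)/3) (5267103/2000000) (by norm_num) (by norm_num))
      (expupp' (271/100) (1642007/10000000) (by norm_num) (by norm_num) (by norm_num))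
      (expupp' (31/10) (633037/5000000) (by norm_num) (by norm_num) (by norm_num))
      (by norm_num) (by norm_num) (by norm_num) ha.le hb
  have ha : ((31/10):ℝ) < t := hb
  clear hb
  -- region t > 3.1
  have hU : Real.exp (-(2*t)/3) ≤ 633037/5000000 := by
    have h1 : Real.exp (-(2*t)/3) ≤ Real.exp (-(2*(31/10))/3) := by
      apply Real.exp_le_exp.mpr; linarith
    exact h1.trans (expupp' (31/10) (633037/5000000) (by norm_num) (by norm_num) (by norm_num))
  have hE := Real.sum_le_exp_of_nonneg (show (0:ℝ) ≤ t/3 by linarith) 5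
  simp [Finset.sum_range_succ, Nat.factorial] at hE
  nlinarith [hE, hU, ha, sq_nonneg (t - 31/10), sq_nonneg ((t - 31/10)^2)]

lemma B1 {u : ℝ} (h0 : 0 ≤ u) (h1 : u ≤ 1) : Real.exp (u/3) * (1 - Real.exp (-u)) ≤ u := by
  have ha1 : |u/2| = u/2 := abs_of_nonneg (by linarith)
  have ha2 : |(-(u/2))| = u/2 := by rw [abs_neg]; exact ha1
  have hbp := Real.exp_bound (x := u/2) (by rw [ha1]; linarith) (n := 3) (by norm_num)
  have hbm := Real.exp_bound (x := -(u/2)) (by rw [ha2]; linarith) (n := 3) (by norm_num)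
  rw [ha1] at hbp
  rw [ha2] at hbm
  rw [abs_le] at hbp hbm
  simp [Finset.sum_range_succ, Nat.factorial] at hbp hbm
  have hup : Real.exp (u/2) - Real.exp (-(u/2)) ≤ u + u^3/18 := by
    rcases hbp with ⟨_, hp2⟩
    rcases hbm with ⟨hm1, _⟩
    nlinarith [hp2, hm1]
  have huE : u + u^3/18 ≤ u * Real.exp (u/6) := by
    nlinarith [Real.add_one_le_exp (u/6), h0, h1, sq_nonneg u]
  have hid : Real.exp (u/3) * (1 - Real.exp (-u))
      = Real.exp (-(u/6)) * (Real.exp (u/2) - Real.exp (-(u/2))) := by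
    rw [mul_sub, mul_sub, mul_one, ← Real.exp_add, ← Real.exp_add, ← Real.exp_add]
    ring_nf
  rw [hid]
  have := mul_le_mul_of_nonneg_left (hup.trans huE) (Real.exp_pos (-(u/6))).le
  calc Real.exp (-(u/6)) * (Real.exp (u/2) - Real.exp (-(u/2)))
      ≤ Real.exp (-(u/6)) * (u * Real.exp (u/6)) := this
    _ = u * (Real.exp (-(u/6)) * Real.exp (u/6)) := by ring
    _ = u := by rw [← Real.exp_add]; norm_num

lemma key {q : ℕ} (hq : 2 ≤ q) {x : ℝ} (hx0 : 0 < x) (hx1 : x < 1) :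
    0.8414 * q * (x ^ (((q : ℝ) - 1) / 3) * (1 - x)) ≤ 1 - x ^ q := by
  rcases le_or_gt q 5 with hq5 | hq6
  · -- small q : polynomial in y = x^(1/3)
    set y := x ^ ((1:ℝ)/3) with hy
    have hy0 : 0 < y := Real.rpow_pos_of_pos hx0 _
    have hy1 : y < 1 := Real.rpow_lt_one hx0.le hx1 (by norm_num)
    have hy3 : y ^ 3 = x := by
      rw [hy, ← Real.rpow_natCast (x ^ ((1:ℝ)/3)) 3, ← Real.rpow_mul hx0.le]
      norm_num
    have hcube : 0 ≤ 1 - y^3 := by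
      have := pow_lt_one₀ hy0.le hy1 (n := 3) (by norm_num)
      linarith
    interval_cases q
    · have hexp : x ^ ((((2:ℕ) : ℝ) - 1) / 3) = y ^ 1 := by
        rw [hy, ← Real.rpow_natCast (x ^ ((1:ℝ)/3)) 1, ← Real.rpow_mul hx0.le]
        norm_num
      rw [hexp, ← hy3]
      have hs : 0.8414*(2:ℕ)*y^1 ≤ 1 + y^3 := by
        push_cast
        nlinarith [sq_nonneg (y - 3/4), sq_nonneg y, hy0.le]
      calc 0.8414*(2:ℕ)*(y^1*(1-y^3)) = (0.8414*(2:ℕ)*y^1)*(1-y^3) := by ring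
        _ ≤ (1 + y^3)*(1-y^3) := mul_le_mul_of_nonneg_right hs hcube
        _ = 1 - (y^3)^2 := by ring
    · have hexp : x ^ ((((3:ℕ) : ℝ) - 1) / 3) = y ^ 2 := by
        rw [hy, ← Real.rpow_natCast (x ^ ((1:ℝ)/3)) 2, ← Real.rpow_mul hx0.le]
        norm_num
      rw [hexp, ← hy3]
      have hs : 0.8414*(3:ℕ)*y^2 ≤ 1 + y^3 + y^6 := by
        push_cast
        nlinarith [sq_nonneg (y - 4/5), sq_nonneg (y^2 - 4/5*y), sq_nonneg (y^3 - 1/2), hy0.le]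
      calc 0.8414*(3:ℕ)*(y^2*(1-y^3)) = (0.8414*(3:ℕ)*y^2)*(1-y^3) := by ring
        _ ≤ (1 + y^3 + y^6)*(1-y^3) := mul_le_mul_of_nonneg_right hs hcube
        _ = 1 - (y^3)^3 := by ring
    · have hexp : x ^ ((((4:ℕ) : ℝ) - 1) / 3) = y ^ 3 := by
        rw [hy, ← Real.rpow_natCast (x ^ ((1:ℝ)/3)) 3, ← Real.rpow_mul hx0.le]
        norm_num
      rw [hexp, ← hy3]
      have hs : 0.8414*(4:ℕ)*y^3 ≤ 1 + y^3 + y^6 + y^9 := by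
        push_cast
        nlinarith [mul_nonneg (pow_nonneg hy0.le 3) (sq_nonneg (y^3 - 3/5)), sq_nonneg (y^3 - 31/50), hy0.le]
      calc 0.8414*(4:ℕ)*(y^3*(1-y^3)) = (0.8414*(4:ℕ)*y^3)*(1-y^3) := by ring
        _ ≤ (1 + y^3 + y^6 + y^9)*(1-y^3) := mul_le_mul_of_nonneg_right hs hcube
        _ = 1 - (y^3)^4 := by ring
    · have hexp : x ^ ((((5:ℕ) : ℝ) - 1) / 3) = y ^ 4 := by
        rw [hy, ← Real.rpow_natCast (x ^ ((1:ℝ)/3)) 4, ← Real.rpow_mul hx0.le]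
        norm_num
      rw [hexp, ← hy3]
      have hs : 0.8414*(5:ℕ)*y^4 ≤ 1 + y^3 + y^6 + y^9 + y^12 := by
        push_cast
        nlinarith [mul_nonneg (mul_nonneg (pow_nonneg hy0.le 3) (by linarith : (0:ℝ) ≤ y + 2)) (sq_nonneg (y-1)), sq_nonneg (y^6 + y^3/2 - 7/10), sq_nonneg (y^3 - 3/4), hy0.le, sq_nonneg (y^3-1)]
      calc 0.8414*(5:ℕ)*(y^4*(1-y^3)) = (0.8414*(5:ℕ)*y^4)*(1-y^3) := by ring
        _ ≤ (1 + y^3 + y^6 + y^9 + y^12)*(1-y^3) := mul_le_mul_of_nonneg_right hs hcube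
        _ = 1 - (y^3)^5 := by ring
  · -- q ≥ 6
    have hq6' : (6:ℝ) ≤ (q:ℝ) := by exact_mod_cast hq6
    rcases le_or_gt x (Real.exp (-1)) with hxe | hxe
    · -- x small
      have hxq : x ^ q ≤ x := by
        calc x ^ q ≤ x ^ 1 := pow_le_pow_of_le_one hx0.le hx1.le (by omega)
          _ = x := pow_one x
      have hr1 : x ^ (((q : ℝ) - 1) / 3) ≤ Real.exp (-(((q:ℝ)-1)/3)) := by
        calc x ^ (((q : ℝ) - 1) / 3) ≤ (Real.exp (-1)) ^ (((q : ℝ) - 1) / 3) :=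
              Real.rpow_le_rpow hx0.le hxe (by linarith)
          _ = Real.exp (-(((q:ℝ)-1)/3)) := by
              rw [← Real.exp_mul]
              ring_nf
      have hpoly : 0.8414 * q ≤ Real.exp (((q:ℝ)-1)/3) := by
        have hE := Real.sum_le_exp_of_nonneg (show (0:ℝ) ≤ ((q:ℝ)-1)/3 by linarith) 5
        simp [Finset.sum_range_succ, Nat.factorial] at hE
        nlinarith [hE, hq6', sq_nonneg ((q:ℝ)-6), sq_nonneg (((q:ℝ)-6)^2)]
      have hmain : 0.8414 * q * x ^ (((q : ℝ) - 1) / 3) ≤ 1 := by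
        calc 0.8414 * q * x ^ (((q : ℝ) - 1) / 3)
            ≤ Real.exp (((q:ℝ)-1)/3) * Real.exp (-(((q:ℝ)-1)/3)) := by
              apply mul_le_mul hpoly hr1 (by positivity) (Real.exp_pos _).le
          _ = 1 := by rw [← Real.exp_add]; norm_num
      have h1x : 0 ≤ 1 - x := by linarith
      calc 0.8414 * q * (x ^ (((q : ℝ) - 1) / 3) * (1 - x))
          = (0.8414 * q * x ^ (((q : ℝ) - 1) / 3)) * (1 - x) := by ring
        _ ≤ 1 * (1 - x) := mul_le_mul_of_nonneg_right hmain h1x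
        _ = 1 - x := one_mul _
        _ ≤ 1 - x ^ q := by linarith
    · -- x close to 1
      set u := -Real.log x with hu
      have hu0 : 0 < u := by
        rw [hu]
        simp only [neg_pos]
        exact Real.log_neg hx0 hx1
      have hu1 : u ≤ 1 := by
        rw [hu]
        have : -1 ≤ Real.log x := (Real.le_log_iff_exp_le hx0).mpr hxe.le
        linarith
      have hxu : x = Real.exp (-u) := by rw [hu, neg_neg, Real.exp_log hx0]
      have hxq : x ^ q = Real.exp (-((q:ℝ)*u)) := by
        rw [hxu, ← Real.exp_nat_mul]
        congr 1
        ring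
      have hxr : x ^ (((q : ℝ) - 1) / 3)
          = Real.exp (-((q:ℝ)*u)/3) * Real.exp (u/3) := by
        rw [Real.rpow_def_of_pos hx0, ← Real.exp_add]
        congr 1
        have : Real.log x = -u := by rw [hu, neg_neg]
        rw [this]
        ring
      have hq0 : (0:ℝ) < q := by positivity
      have hcore := core (t := (q:ℝ)*u) (by positivity)
      -- multiply core by exp(-(q u)/3)
      have hcore2 : 0.8414 * ((q:ℝ)*u) * Real.exp (-((q:ℝ)*u)/3) ≤ 1 - Real.exp (-((q:ℝ)*u)) := by
        have hm := mul_le_mul_of_nonneg_right hcore (Real.exp_pos (-((q:ℝ)*u)/3)).le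
        have e1 : (Real.exp ((q:ℝ)*u/3) - Real.exp (-(2*((q:ℝ)*u))/3)) * Real.exp (-((q:ℝ)*u)/3)
            = 1 - Real.exp (-((q:ℝ)*u)) := by
          rw [sub_mul, ← Real.exp_add, ← Real.exp_add]
          ring_nf
          simp [Real.exp_zero]
        rw [e1] at hm
        exact hm
      have hB := B1 hu0.le hu1
      rw [hxq, hxr, hxu]
      have hstep : 0.8414 * (q:ℝ) * (Real.exp (-((q:ℝ)*u)/3) * Real.exp (u/3) * (1 - Real.exp (-u)))
          ≤ 0.8414 * ((q:ℝ)*u) * Real.exp (-((q:ℝ)*u)/3) := by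
        have hc : 0 ≤ 0.8414 * (q:ℝ) * Real.exp (-((q:ℝ)*u)/3) := by positivity
        calc 0.8414 * (q:ℝ) * (Real.exp (-((q:ℝ)*u)/3) * Real.exp (u/3) * (1 - Real.exp (-u)))
            = (0.8414 * (q:ℝ) * Real.exp (-((q:ℝ)*u)/3)) * (Real.exp (u/3) * (1 - Real.exp (-u))) := by
              ring
          _ ≤ (0.8414 * (q:ℝ) * Real.exp (-((q:ℝ)*u)/3)) * u := mul_le_mul_of_nonneg_left hB hc
          _ = 0.8414 * ((q:ℝ)*u) * Real.exp (-((q:ℝ)*u)/3) := by ring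
      exact hstep.trans hcore2

theorem stmt6 {q : ℕ} (hq : 2 ≤ q) :
    0.8414 * q ≤
      sInf ((fun x : ℝ => (1 - x ^ q) / (x ^ (((q : ℝ) - 1) / 3) * (1 - x))) ''
        Set.Ioo (0 : ℝ) 1) := by
  apply le_csInf
  · exact ⟨_, ⟨(1:ℝ)/2, ⟨by norm_num, by norm_num⟩, rfl⟩⟩
  · rintro b ⟨x, ⟨hx0, hx1⟩, rfl⟩
    have hden : 0 < x ^ (((q : ℝ) - 1) / 3) * (1 - x) :=
      mul_pos (Real.rpow_pos_of_pos hx0 _) (by linarith)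
    rw [le_div_iff₀ hden]
    exact key hq hx0 hx1
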